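/- For every λ > 0 and every x in the slab Ω = {x ∈ ℝ³ : |x₃| < 1}, setting a = 1/(1+x₃) and b = 1/(1−x₃), the multiset of eigenvalues of the real symmetric matrix D²Φ(x) is {0, Λ₊, Λ₋}, where Λ± = 2λ [ 1/(1−x₃²) + (a³/2)x₁² + (b³/2)x₂² ± ( (1/4)(2abx₃ + (b³x₂² − a³x₁²))² + a³b³x₁²x₂² )^{1/2} ]. -/

import Mathlib

/-- The potential `Φ(x) = λ x₁²/(1+x₃) + λ x₂²/(1−x₃)`. -/
noncomputable def Phi (l : ℝ) (x : EuclideanSpace ℝ (Fin 3)) : ℝ :=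
  l * (x 0) ^ 2 / (1 + x 2) + l * (x 1) ^ 2 / (1 - x 2)

/-- The Hessian matrix of a function on `ℝⁿ`, with entries the second partial derivatives. -/
noncomputable def hess {n : ℕ} (f : EuclideanSpace ℝ (Fin n) → ℝ)
    (x : EuclideanSpace ℝ (Fin n)) : Matrix (Fin n) (Fin n) ℝ :=
  Matrix.of fun i j =>
    fderiv ℝ (fun y => fderiv ℝ f y (EuclideanSpace.single j 1)) x (EuclideanSpace.single i 1)

/-- `Λ₊` and `Λ₋`: the two nonzero eigenvalues of `D²Φ`, with sign `s = 1` resp. `s = -1`,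
where `a = 1/(1+x₃)`, `b = 1/(1−x₃)`. -/
noncomputable def Lam (l : ℝ) (x : EuclideanSpace ℝ (Fin 3)) (s : ℝ) : ℝ :=
  (1 / (1 + x 2)) |> fun a => (1 / (1 - x 2)) |> fun b =>
  2 * l * (1 / (1 - (x 2) ^ 2) + a ^ 3 / 2 * (x 0) ^ 2 + b ^ 3 / 2 * (x 1) ^ 2 +
    s * Real.sqrt ((1 / 4) * (2 * a * b * x 2 + (b ^ 3 * (x 1) ^ 2 - a ^ 3 * (x 0) ^ 2)) ^ 2 +
      a ^ 3 * b ^ 3 * (x 0) ^ 2 * (x 1) ^ 2))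

open Polynomial Matrix

/-! ### Linear algebra: eigenvalue multiset from the characteristic polynomial -/

private lemma charpoly_conj {m : ℕ} (U V D : Matrix (Fin m) (Fin m) ℝ) (hUV : U * V = 1) :
    (U * D * V).charpoly = D.charpoly := by
  let C' : Matrix (Fin m) (Fin m) ℝ →+* Matrix (Fin m) (Fin m) ℝ[X] := (C : ℝ →+* ℝ[X]).mapMatrix
  have h1 : C' U * C' V = 1 := by rw [← _root_.map_mul, hUV, _root_.map_one]
  have hc : charmatrix (U * D * V) = C' U * charmatrix D * C' V := by
    unfold Matrix.charmatrix
    rw [mul_sub, sub_mul]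
    congr 1
    · rw [mul_assoc, (Matrix.scalar_commute (X : ℝ[X]) (fun r => Commute.all _ _) (C' V)).eq,
        ← mul_assoc, h1, one_mul]
    · simp only [_root_.map_mul, C']
  have hdet : (C' U).det * (C' V).det = 1 := by rw [← Matrix.det_mul, h1, Matrix.det_one]
  unfold Matrix.charpoly
  rw [hc, Matrix.det_mul, Matrix.det_mul]
  linear_combination D.charmatrix.det * hdet

private lemma charpoly_diagonal {m : ℕ} (d : Fin m → ℝ) :
    (Matrix.diagonal d).charpoly = ∏ i, (X - C (d i)) := by
  have h : charmatrix (Matrix.diagonal d) = Matrix.diagonal (fun i => X - C (d i)) := by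
    ext i j
    by_cases hij : i = j
    · subst hij; simp
    · simp [Matrix.charmatrix_apply_ne _ _ _ hij, Matrix.diagonal_apply_ne _ hij]
  rw [Matrix.charpoly, h, Matrix.det_diagonal]

private lemma charpoly_eq_prod_eigenvalues {m : ℕ} {A : Matrix (Fin m) (Fin m) ℝ}
    (hA : A.IsHermitian) :
    A.charpoly = ((Multiset.map hA.eigenvalues Finset.univ.val).map (fun r => X - C r)).prod := by
  have hU2 := (hA.eigenvectorUnitary).2
  have hUV : (hA.eigenvectorUnitary : Matrix (Fin m) (Fin m) ℝ) *
      (star hA.eigenvectorUnitary : Matrix (Fin m) (Fin m) ℝ) = 1 := by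
    simpa using (Matrix.mem_unitaryGroup_iff.mp hU2)
  have hspec := hA.spectral_theorem
  have hofe : (RCLike.ofReal ∘ hA.eigenvalues : Fin m → ℝ) = hA.eigenvalues := by
    funext i; simp
  rw [hofe] at hspec
  calc A.charpoly = ((hA.eigenvectorUnitary : Matrix (Fin m) (Fin m) ℝ) *
        Matrix.diagonal hA.eigenvalues *
        (star hA.eigenvectorUnitary : Matrix (Fin m) (Fin m) ℝ)).charpoly := by exact congrArg Matrix.charpoly hspec
    _ = (Matrix.diagonal hA.eigenvalues).charpoly := charpoly_conj _ _ _ hUV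
    _ = ∏ i, (X - C (hA.eigenvalues i)) := _root_.charpoly_diagonal _
    _ = _ := by rw [Finset.prod_eq_multiset_prod, Multiset.map_map]; rfl

private lemma eig_multiset {m : ℕ} {A : Matrix (Fin m) (Fin m) ℝ} (hA : A.IsHermitian)
    (s : Multiset ℝ) (h : A.charpoly = (s.map fun r => X - C r).prod) :
    Multiset.map hA.eigenvalues Finset.univ.val = s := by
  have h1 := (charpoly_eq_prod_eigenvalues hA).symm.trans h
  have h2 := congrArg Polynomial.roots h1
  rwa [Polynomial.roots_multiset_prod_X_sub_C, Polynomial.roots_multiset_prod_X_sub_C] at h2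

private lemma charpoly_fin3 (A : Matrix (Fin 3) (Fin 3) ℝ) :
    A.charpoly = X^3 - C (A 0 0 + A 1 1 + A 2 2) * X^2
      + C (A 0 0 * A 1 1 + A 0 0 * A 2 2 + A 1 1 * A 2 2
          - A 0 1 * A 1 0 - A 0 2 * A 2 0 - A 1 2 * A 2 1) * X
      - C (A 0 0 * A 1 1 * A 2 2 - A 0 0 * A 1 2 * A 2 1 - A 0 1 * A 1 0 * A 2 2
          + A 0 1 * A 1 2 * A 2 0 + A 0 2 * A 1 0 * A 2 1 - A 0 2 * A 1 1 * A 2 0) := by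
  rw [Matrix.charpoly, Matrix.det_fin_three]
  simp only [Matrix.charmatrix_apply_eq,
    Matrix.charmatrix_apply_ne _ _ _ (by decide : (0:Fin 3) ≠ 1),
    Matrix.charmatrix_apply_ne _ _ _ (by decide : (0:Fin 3) ≠ 2),
    Matrix.charmatrix_apply_ne _ _ _ (by decide : (1:Fin 3) ≠ 0),
    Matrix.charmatrix_apply_ne _ _ _ (by decide : (1:Fin 3) ≠ 2),
    Matrix.charmatrix_apply_ne _ _ _ (by decide : (2:Fin 3) ≠ 0),
    Matrix.charmatrix_apply_ne _ _ _ (by decide : (2:Fin 3) ≠ 1),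
    map_add, _root_.map_mul, map_sub]
  ring

private lemma cubic_factor (T E Dd p q : ℝ) (h1 : T = p + q) (h2 : E = p * q) (h3 : Dd = 0) :
    (X:ℝ[X])^3 - C T * X^2 + C E * X - C Dd
      = (((({0, p, q}) : Multiset ℝ)).map (fun r => X - C r)).prod := by
  subst h1; subst h2; subst h3
  simp only [Multiset.insert_eq_cons, Multiset.map_cons, Multiset.map_singleton,
    Multiset.prod_cons, Multiset.prod_singleton, map_add, _root_.map_mul, map_zero,
    _root_.map_one]
  ring

private lemma sum_form (l A S : ℝ) : 2*l*(A + 1*S) + 2*l*(A + (-1)*S) = 4*l*A := by ring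

private lemma prod_form (l A S D : ℝ) (hS : S^2 = D) :
    (2*l*(A + 1*S)) * (2*l*(A + (-1)*S)) = 4*l^2*A^2 - 4*l^2*D := by
  linear_combination (-4*l^2 : ℝ) * hS

/-! ### Calculus: directional derivatives -/

private lemma fderiv_apply_single {f : EuclideanSpace ℝ (Fin 3) → ℝ}
    {y : EuclideanSpace ℝ (Fin 3)} (hf : DifferentiableAt ℝ f y) (j : Fin 3) {v : ℝ}
    (hv : HasDerivAt (fun t : ℝ => f (y + t • EuclideanSpace.single j (1:ℝ))) v 0) :
    fderiv ℝ f y (EuclideanSpace.single j (1:ℝ)) = v := by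
  have hc : HasDerivAt (fun t : ℝ => y + t • EuclideanSpace.single j (1:ℝ))
      (EuclideanSpace.single j (1:ℝ)) 0 := by
    simpa using ((hasDerivAt_id (0:ℝ)).smul_const (EuclideanSpace.single j (1:ℝ))).const_add y
  have hf' : HasFDerivAt f (fderiv ℝ f y)
      ((fun t : ℝ => y + t • EuclideanSpace.single j (1:ℝ)) 0) := by
    simpa using hf.hasFDerivAt
  exact (hf'.comp_hasDerivAt 0 hc).unique hv

private lemma diffAt_coord (i : Fin 3) (y : EuclideanSpace ℝ (Fin 3)) :
    DifferentiableAt ℝ (fun y : EuclideanSpace ℝ (Fin 3) => y i) y :=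
  (EuclideanSpace.proj i : EuclideanSpace ℝ (Fin 3) →L[ℝ] ℝ).differentiableAt

private lemma diffAt_Phi (l : ℝ) (y : EuclideanSpace ℝ (Fin 3))
    (hp : 1 + y 2 ≠ 0) (hm : 1 - y 2 ≠ 0) : DifferentiableAt ℝ (Phi l) y := by
  have : DifferentiableAt ℝ
      (fun y : EuclideanSpace ℝ (Fin 3) => l * (y 0)^2 / (1 + y 2) + l * (y 1)^2 / (1 - y 2)) y := by
    simp only [div_eq_mul_inv]
    exact ((((diffAt_coord 0 y).pow 2).const_mul l).mul
        (((differentiableAt_const (1:ℝ)).add (diffAt_coord 2 y)).inv hp)).add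
      ((((diffAt_coord 1 y).pow 2).const_mul l).mul
        (((differentiableAt_const (1:ℝ)).sub (diffAt_coord 2 y)).inv hm))
  exact this

private lemma fderiv_Phi_0 (l : ℝ) (y : EuclideanSpace ℝ (Fin 3))
    (hp : 1 + y 2 ≠ 0) (hm : 1 - y 2 ≠ 0) :
    fderiv ℝ (Phi l) y (EuclideanSpace.single (0 : Fin 3) (1:ℝ)) = 2 * l * (y 0) / (1 + y 2) := by
  refine fderiv_apply_single (diffAt_Phi l y hp hm) 0 ?_
  have hfun : (fun t : ℝ => Phi l (y + t • EuclideanSpace.single (0:Fin 3) (1:ℝ)))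
      = fun t => l * (y 0 + t)^2 / (1 + y 2) + l * (y 1)^2 / (1 - y 2) := by
    funext t
    simp [Phi, EuclideanSpace.single_apply, PiLp.add_apply, PiLp.smul_apply]
  rw [hfun]
  have h1' := (((hasDerivAt_id' (0:ℝ)).const_add (y 0)).pow 2).const_mul l
  have hd := (h1'.div (hasDerivAt_const (0:ℝ) (1 + y 2)) hp).add_const (l * (y 1)^2 / (1 - y 2))
  convert hd using 1
  any_goals rfl
  field_simp
  try ring
  try ring

private lemma fderiv_Phi_1 (l : ℝ) (y : EuclideanSpace ℝ (Fin 3))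
    (hp : 1 + y 2 ≠ 0) (hm : 1 - y 2 ≠ 0) :
    fderiv ℝ (Phi l) y (EuclideanSpace.single (1 : Fin 3) (1:ℝ)) = 2 * l * (y 1) / (1 - y 2) := by
  refine fderiv_apply_single (diffAt_Phi l y hp hm) 1 ?_
  have hfun : (fun t : ℝ => Phi l (y + t • EuclideanSpace.single (1:Fin 3) (1:ℝ)))
      = fun t => l * (y 1 + t)^2 / (1 - y 2) + l * (y 0)^2 / (1 + y 2) := by
    funext t
    simp [Phi, EuclideanSpace.single_apply, PiLp.add_apply, PiLp.smul_apply]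
    ring
  rw [hfun]
  have h1' := (((hasDerivAt_id' (0:ℝ)).const_add (y 1)).pow 2).const_mul l
  have hd := (h1'.div (hasDerivAt_const (0:ℝ) (1 - y 2)) hm).add_const (l * (y 0)^2 / (1 + y 2))
  convert hd using 1
  any_goals rfl
  field_simp
  try ring
  try ring

private lemma fderiv_Phi_2 (l : ℝ) (y : EuclideanSpace ℝ (Fin 3))
    (hp : 1 + y 2 ≠ 0) (hm : 1 - y 2 ≠ 0) :
    fderiv ℝ (Phi l) y (EuclideanSpace.single (2 : Fin 3) (1:ℝ))
      = l * (y 1)^2 / (1 - y 2)^2 - l * (y 0)^2 / (1 + y 2)^2 := by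
  refine fderiv_apply_single (diffAt_Phi l y hp hm) 2 ?_
  have hfun : (fun t : ℝ => Phi l (y + t • EuclideanSpace.single (2:Fin 3) (1:ℝ)))
      = fun t => l * (y 0)^2 / (1 + (y 2 + t)) + l * (y 1)^2 / (1 - (y 2 + t)) := by
    funext t
    simp [Phi, EuclideanSpace.single_apply, PiLp.add_apply, PiLp.smul_apply]
  rw [hfun]
  have hden1 := ((hasDerivAt_id' (0:ℝ)).const_add (y 2)).const_add 1
  have hden2 := ((hasDerivAt_id' (0:ℝ)).const_add (y 2)).const_sub 1
  have hd := ((hasDerivAt_const (0:ℝ) (l * (y 0)^2)).div hden1 (by simpa using hp)).add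
    ((hasDerivAt_const (0:ℝ) (l * (y 1)^2)).div hden2 (by simpa using hm))
  convert hd using 1
  any_goals rfl
  simp only [add_zero, Pi.pow_apply]
  field_simp
  try ring
  try ring

/-! ### Second partial derivatives -/

private lemma diffAt_g0 (l : ℝ) (y : EuclideanSpace ℝ (Fin 3)) (hp : 1 + y 2 ≠ 0) :
    DifferentiableAt ℝ (fun y : EuclideanSpace ℝ (Fin 3) => 2 * l * (y 0) / (1 + y 2)) y := by
  simp only [div_eq_mul_inv]
  exact ((diffAt_coord 0 y).const_mul (2*l)).mul
    (((differentiableAt_const (1:ℝ)).add (diffAt_coord 2 y)).inv hp)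

private lemma diffAt_g1 (l : ℝ) (y : EuclideanSpace ℝ (Fin 3)) (hm : 1 - y 2 ≠ 0) :
    DifferentiableAt ℝ (fun y : EuclideanSpace ℝ (Fin 3) => 2 * l * (y 1) / (1 - y 2)) y := by
  simp only [div_eq_mul_inv]
  exact ((diffAt_coord 1 y).const_mul (2*l)).mul
    (((differentiableAt_const (1:ℝ)).sub (diffAt_coord 2 y)).inv hm)

private lemma diffAt_g2 (l : ℝ) (y : EuclideanSpace ℝ (Fin 3))
    (hp : 1 + y 2 ≠ 0) (hm : 1 - y 2 ≠ 0) :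
    DifferentiableAt ℝ (fun y : EuclideanSpace ℝ (Fin 3) =>
      l * (y 1)^2 / (1 - y 2)^2 - l * (y 0)^2 / (1 + y 2)^2) y := by
  simp only [div_eq_mul_inv]
  exact ((((diffAt_coord 1 y).pow 2).const_mul l).mul
      ((((differentiableAt_const (1:ℝ)).sub (diffAt_coord 2 y)).pow 2).inv (pow_ne_zero 2 hm))).sub
    ((((diffAt_coord 0 y).pow 2).const_mul l).mul
      ((((differentiableAt_const (1:ℝ)).add (diffAt_coord 2 y)).pow 2).inv (pow_ne_zero 2 hp)))

private lemma fderiv_g0_0 (l : ℝ) (y : EuclideanSpace ℝ (Fin 3)) (hp : 1 + y 2 ≠ 0) :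
    fderiv ℝ (fun y : EuclideanSpace ℝ (Fin 3) => 2 * l * (y 0) / (1 + y 2)) y
      (EuclideanSpace.single (0 : Fin 3) (1:ℝ)) = 2 * l / (1 + y 2) := by
  refine fderiv_apply_single (diffAt_g0 l y hp) 0 ?_
  have hfun : (fun t : ℝ => (fun y : EuclideanSpace ℝ (Fin 3) => 2 * l * (y 0) / (1 + y 2))
      (y + t • EuclideanSpace.single (0:Fin 3) (1:ℝ)))
      = fun t => 2 * l * (y 0 + t) / (1 + y 2) := by
    funext t; simp [EuclideanSpace.single_apply, PiLp.add_apply, PiLp.smul_apply]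
  rw [hfun]
  have hd := (((hasDerivAt_id' (0:ℝ)).const_add (y 0)).const_mul (2*l)).div
    (hasDerivAt_const (0:ℝ) (1 + y 2)) hp
  convert hd using 1
  any_goals rfl
  field_simp
  try ring

private lemma fderiv_g0_1 (l : ℝ) (y : EuclideanSpace ℝ (Fin 3)) (hp : 1 + y 2 ≠ 0) :
    fderiv ℝ (fun y : EuclideanSpace ℝ (Fin 3) => 2 * l * (y 0) / (1 + y 2)) y
      (EuclideanSpace.single (1 : Fin 3) (1:ℝ)) = 0 := by
  refine fderiv_apply_single (diffAt_g0 l y hp) 1 ?_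
  have hfun : (fun t : ℝ => (fun y : EuclideanSpace ℝ (Fin 3) => 2 * l * (y 0) / (1 + y 2))
      (y + t • EuclideanSpace.single (1:Fin 3) (1:ℝ)))
      = fun _ : ℝ => 2 * l * (y 0) / (1 + y 2) := by
    funext t; simp [EuclideanSpace.single_apply, PiLp.add_apply, PiLp.smul_apply]
  rw [hfun]
  exact hasDerivAt_const _ _

private lemma fderiv_g0_2 (l : ℝ) (y : EuclideanSpace ℝ (Fin 3)) (hp : 1 + y 2 ≠ 0) :
    fderiv ℝ (fun y : EuclideanSpace ℝ (Fin 3) => 2 * l * (y 0) / (1 + y 2)) y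
      (EuclideanSpace.single (2 : Fin 3) (1:ℝ)) = -(2 * l * (y 0)) / (1 + y 2)^2 := by
  refine fderiv_apply_single (diffAt_g0 l y hp) 2 ?_
  have hfun : (fun t : ℝ => (fun y : EuclideanSpace ℝ (Fin 3) => 2 * l * (y 0) / (1 + y 2))
      (y + t • EuclideanSpace.single (2:Fin 3) (1:ℝ)))
      = fun t => 2 * l * (y 0) / (1 + (y 2 + t)) := by
    funext t; simp [EuclideanSpace.single_apply, PiLp.add_apply, PiLp.smul_apply]
  rw [hfun]
  have hd := (hasDerivAt_const (0:ℝ) (2 * l * (y 0))).div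
    (((hasDerivAt_id' (0:ℝ)).const_add (y 2)).const_add 1) (by simpa using hp)
  convert hd using 1
  any_goals rfl
  simp only [add_zero, Pi.pow_apply]
  field_simp
  try ring
  try ring

private lemma fderiv_g1_0 (l : ℝ) (y : EuclideanSpace ℝ (Fin 3)) (hm : 1 - y 2 ≠ 0) :
    fderiv ℝ (fun y : EuclideanSpace ℝ (Fin 3) => 2 * l * (y 1) / (1 - y 2)) y
      (EuclideanSpace.single (0 : Fin 3) (1:ℝ)) = 0 := by
  refine fderiv_apply_single (diffAt_g1 l y hm) 0 ?_
  have hfun : (fun t : ℝ => (fun y : EuclideanSpace ℝ (Fin 3) => 2 * l * (y 1) / (1 - y 2))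
      (y + t • EuclideanSpace.single (0:Fin 3) (1:ℝ)))
      = fun _ : ℝ => 2 * l * (y 1) / (1 - y 2) := by
    funext t; simp [EuclideanSpace.single_apply, PiLp.add_apply, PiLp.smul_apply]
  rw [hfun]
  exact hasDerivAt_const _ _

private lemma fderiv_g1_1 (l : ℝ) (y : EuclideanSpace ℝ (Fin 3)) (hm : 1 - y 2 ≠ 0) :
    fderiv ℝ (fun y : EuclideanSpace ℝ (Fin 3) => 2 * l * (y 1) / (1 - y 2)) y
      (EuclideanSpace.single (1 : Fin 3) (1:ℝ)) = 2 * l / (1 - y 2) := by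
  refine fderiv_apply_single (diffAt_g1 l y hm) 1 ?_
  have hfun : (fun t : ℝ => (fun y : EuclideanSpace ℝ (Fin 3) => 2 * l * (y 1) / (1 - y 2))
      (y + t • EuclideanSpace.single (1:Fin 3) (1:ℝ)))
      = fun t => 2 * l * (y 1 + t) / (1 - y 2) := by
    funext t; simp [EuclideanSpace.single_apply, PiLp.add_apply, PiLp.smul_apply]
  rw [hfun]
  have hd := (((hasDerivAt_id' (0:ℝ)).const_add (y 1)).const_mul (2*l)).div
    (hasDerivAt_const (0:ℝ) (1 - y 2)) hm
  convert hd using 1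
  any_goals rfl
  field_simp
  try ring

private lemma fderiv_g1_2 (l : ℝ) (y : EuclideanSpace ℝ (Fin 3)) (hm : 1 - y 2 ≠ 0) :
    fderiv ℝ (fun y : EuclideanSpace ℝ (Fin 3) => 2 * l * (y 1) / (1 - y 2)) y
      (EuclideanSpace.single (2 : Fin 3) (1:ℝ)) = 2 * l * (y 1) / (1 - y 2)^2 := by
  refine fderiv_apply_single (diffAt_g1 l y hm) 2 ?_
  have hfun : (fun t : ℝ => (fun y : EuclideanSpace ℝ (Fin 3) => 2 * l * (y 1) / (1 - y 2))
      (y + t • EuclideanSpace.single (2:Fin 3) (1:ℝ)))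
      = fun t => 2 * l * (y 1) / (1 - (y 2 + t)) := by
    funext t; simp [EuclideanSpace.single_apply, PiLp.add_apply, PiLp.smul_apply]
  rw [hfun]
  have hd := (hasDerivAt_const (0:ℝ) (2 * l * (y 1))).div
    (((hasDerivAt_id' (0:ℝ)).const_add (y 2)).const_sub 1) (by simpa using hm)
  convert hd using 1
  any_goals rfl
  simp only [add_zero, Pi.pow_apply]
  field_simp
  try ring
  try ring

private lemma fderiv_g2_0 (l : ℝ) (y : EuclideanSpace ℝ (Fin 3))
    (hp : 1 + y 2 ≠ 0) (hm : 1 - y 2 ≠ 0) :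
    fderiv ℝ (fun y : EuclideanSpace ℝ (Fin 3) =>
        l * (y 1)^2 / (1 - y 2)^2 - l * (y 0)^2 / (1 + y 2)^2) y
      (EuclideanSpace.single (0 : Fin 3) (1:ℝ)) = -(2 * l * (y 0)) / (1 + y 2)^2 := by
  refine fderiv_apply_single (diffAt_g2 l y hp hm) 0 ?_
  have hfun : (fun t : ℝ => (fun y : EuclideanSpace ℝ (Fin 3) =>
        l * (y 1)^2 / (1 - y 2)^2 - l * (y 0)^2 / (1 + y 2)^2)
      (y + t • EuclideanSpace.single (0:Fin 3) (1:ℝ)))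
      = fun t => l * (y 1)^2 / (1 - y 2)^2 - l * (y 0 + t)^2 / (1 + y 2)^2 := by
    funext t; simp [EuclideanSpace.single_apply, PiLp.add_apply, PiLp.smul_apply]
  rw [hfun]
  have hd := (hasDerivAt_const (0:ℝ) (l * (y 1)^2 / (1 - y 2)^2)).sub
    (((((hasDerivAt_id' (0:ℝ)).const_add (y 0)).pow 2).const_mul l).div
      (hasDerivAt_const (0:ℝ) ((1 + y 2)^2)) (pow_ne_zero 2 hp))
  convert hd using 1
  any_goals rfl
  field_simp
  try ring
  try ring

private lemma fderiv_g2_1 (l : ℝ) (y : EuclideanSpace ℝ (Fin 3))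
    (hp : 1 + y 2 ≠ 0) (hm : 1 - y 2 ≠ 0) :
    fderiv ℝ (fun y : EuclideanSpace ℝ (Fin 3) =>
        l * (y 1)^2 / (1 - y 2)^2 - l * (y 0)^2 / (1 + y 2)^2) y
      (EuclideanSpace.single (1 : Fin 3) (1:ℝ)) = 2 * l * (y 1) / (1 - y 2)^2 := by
  refine fderiv_apply_single (diffAt_g2 l y hp hm) 1 ?_
  have hfun : (fun t : ℝ => (fun y : EuclideanSpace ℝ (Fin 3) =>
        l * (y 1)^2 / (1 - y 2)^2 - l * (y 0)^2 / (1 + y 2)^2)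
      (y + t • EuclideanSpace.single (1:Fin 3) (1:ℝ)))
      = fun t => l * (y 1 + t)^2 / (1 - y 2)^2 - l * (y 0)^2 / (1 + y 2)^2 := by
    funext t; simp [EuclideanSpace.single_apply, PiLp.add_apply, PiLp.smul_apply]
  rw [hfun]
  have hd := ((((((hasDerivAt_id' (0:ℝ)).const_add (y 1)).pow 2).const_mul l).div
      (hasDerivAt_const (0:ℝ) ((1 - y 2)^2)) (pow_ne_zero 2 hm))).sub_const
    (l * (y 0)^2 / (1 + y 2)^2)
  convert hd using 1
  any_goals rfl
  field_simp
  try ring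
  try ring

private lemma fderiv_g2_2 (l : ℝ) (y : EuclideanSpace ℝ (Fin 3))
    (hp : 1 + y 2 ≠ 0) (hm : 1 - y 2 ≠ 0) :
    fderiv ℝ (fun y : EuclideanSpace ℝ (Fin 3) =>
        l * (y 1)^2 / (1 - y 2)^2 - l * (y 0)^2 / (1 + y 2)^2) y
      (EuclideanSpace.single (2 : Fin 3) (1:ℝ))
      = 2 * l * (y 0)^2 / (1 + y 2)^3 + 2 * l * (y 1)^2 / (1 - y 2)^3 := by
  refine fderiv_apply_single (diffAt_g2 l y hp hm) 2 ?_
  have hfun : (fun t : ℝ => (fun y : EuclideanSpace ℝ (Fin 3) =>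
        l * (y 1)^2 / (1 - y 2)^2 - l * (y 0)^2 / (1 + y 2)^2)
      (y + t • EuclideanSpace.single (2:Fin 3) (1:ℝ)))
      = fun t => l * (y 1)^2 / (1 - (y 2 + t))^2 - l * (y 0)^2 / (1 + (y 2 + t))^2 := by
    funext t; simp [EuclideanSpace.single_apply, PiLp.add_apply, PiLp.smul_apply]
  rw [hfun]
  have hd := ((hasDerivAt_const (0:ℝ) (l * (y 1)^2)).div
      ((((hasDerivAt_id' (0:ℝ)).const_add (y 2)).const_sub 1).pow 2)
      (pow_ne_zero 2 (by simpa using hm))).sub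
    ((hasDerivAt_const (0:ℝ) (l * (y 0)^2)).div
      ((((hasDerivAt_id' (0:ℝ)).const_add (y 2)).const_add 1).pow 2)
      (pow_ne_zero 2 (by simpa using hp)))
  convert hd using 1
  any_goals rfl
  simp only [add_zero, Pi.pow_apply]
  field_simp
  try ring
  try ring

set_option maxHeartbeats 2000000 in
/-- For every `λ > 0` and `x` in the slab `{|x₃| < 1}`, the Hessian `D²Φ(x)` is real symmetric
and the multiset of its eigenvalues (with multiplicity) is `{0, Λ₊, Λ₋}`. -/
theorem hess_Phi_eigenvalues (l : ℝ) (hl : 0 < l)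
    (x : EuclideanSpace ℝ (Fin 3)) (hx : |x 2| < 1) :
    ∃ h : (hess (Phi l) x).IsHermitian,
      Multiset.map h.eigenvalues Finset.univ.val =
        ({0, Lam l x 1, Lam l x (-1)} : Multiset ℝ) := by
  obtain ⟨hgt, hlt⟩ := abs_lt.mp hx
  have hp : 1 + x 2 ≠ 0 := by linarith
  have hm : 1 - x 2 ≠ 0 := by linarith
  have hp' : (0:ℝ) < 1 + x 2 := by linarith
  have hm' : (0:ℝ) < 1 - x 2 := by linarith
  have hsq : 1 - (x 2)^2 ≠ 0 := by
    have : 1 - (x 2)^2 = (1 + x 2) * (1 - x 2) := by ring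
    rw [this]; exact mul_ne_zero hp hm
  -- the neighborhood in the slab
  have hmem : {y : EuclideanSpace ℝ (Fin 3) | |y 2| < 1} ∈ nhds x := by
    have hcont : Continuous fun y : EuclideanSpace ℝ (Fin 3) => |y 2| :=
      ((EuclideanSpace.proj (2:Fin 3) : EuclideanSpace ℝ (Fin 3) →L[ℝ] ℝ).continuous).abs
    exact (isOpen_lt hcont continuous_const).mem_nhds hx
  -- the first partial derivatives agree with explicit functions near x
  have hev0 : (fun y => fderiv ℝ (Phi l) y (EuclideanSpace.single (0:Fin 3) (1:ℝ)))
      =ᶠ[nhds x] fun y => 2 * l * (y 0) / (1 + y 2) := by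
    filter_upwards [hmem] with y hy
    obtain ⟨h1, h2⟩ := abs_lt.mp hy
    exact fderiv_Phi_0 l y (by linarith) (by linarith)
  have hev1 : (fun y => fderiv ℝ (Phi l) y (EuclideanSpace.single (1:Fin 3) (1:ℝ)))
      =ᶠ[nhds x] fun y => 2 * l * (y 1) / (1 - y 2) := by
    filter_upwards [hmem] with y hy
    obtain ⟨h1, h2⟩ := abs_lt.mp hy
    exact fderiv_Phi_1 l y (by linarith) (by linarith)
  have hev2 : (fun y => fderiv ℝ (Phi l) y (EuclideanSpace.single (2:Fin 3) (1:ℝ)))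
      =ᶠ[nhds x] fun y => l * (y 1)^2 / (1 - y 2)^2 - l * (y 0)^2 / (1 + y 2)^2 := by
    filter_upwards [hmem] with y hy
    obtain ⟨h1, h2⟩ := abs_lt.mp hy
    exact fderiv_Phi_2 l y (by linarith) (by linarith)
  -- the nine entries of the Hessian
  have e00 : hess (Phi l) x 0 0 = 2 * l / (1 + x 2) := by
    show fderiv ℝ (fun y => fderiv ℝ (Phi l) y (EuclideanSpace.single (0:Fin 3) (1:ℝ))) x
      (EuclideanSpace.single (0:Fin 3) (1:ℝ)) = _
    rw [hev0.fderiv_eq]; exact fderiv_g0_0 l x hp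
  have e10 : hess (Phi l) x 1 0 = 0 := by
    show fderiv ℝ (fun y => fderiv ℝ (Phi l) y (EuclideanSpace.single (0:Fin 3) (1:ℝ))) x
      (EuclideanSpace.single (1:Fin 3) (1:ℝ)) = _
    rw [hev0.fderiv_eq]; exact fderiv_g0_1 l x hp
  have e20 : hess (Phi l) x 2 0 = -(2 * l * (x 0)) / (1 + x 2)^2 := by
    show fderiv ℝ (fun y => fderiv ℝ (Phi l) y (EuclideanSpace.single (0:Fin 3) (1:ℝ))) x
      (EuclideanSpace.single (2:Fin 3) (1:ℝ)) = _
    rw [hev0.fderiv_eq]; exact fderiv_g0_2 l x hp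
  have e01 : hess (Phi l) x 0 1 = 0 := by
    show fderiv ℝ (fun y => fderiv ℝ (Phi l) y (EuclideanSpace.single (1:Fin 3) (1:ℝ))) x
      (EuclideanSpace.single (0:Fin 3) (1:ℝ)) = _
    rw [hev1.fderiv_eq]; exact fderiv_g1_0 l x hm
  have e11 : hess (Phi l) x 1 1 = 2 * l / (1 - x 2) := by
    show fderiv ℝ (fun y => fderiv ℝ (Phi l) y (EuclideanSpace.single (1:Fin 3) (1:ℝ))) x
      (EuclideanSpace.single (1:Fin 3) (1:ℝ)) = _
    rw [hev1.fderiv_eq]; exact fderiv_g1_1 l x hm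
  have e21 : hess (Phi l) x 2 1 = 2 * l * (x 1) / (1 - x 2)^2 := by
    show fderiv ℝ (fun y => fderiv ℝ (Phi l) y (EuclideanSpace.single (1:Fin 3) (1:ℝ))) x
      (EuclideanSpace.single (2:Fin 3) (1:ℝ)) = _
    rw [hev1.fderiv_eq]; exact fderiv_g1_2 l x hm
  have e02 : hess (Phi l) x 0 2 = -(2 * l * (x 0)) / (1 + x 2)^2 := by
    show fderiv ℝ (fun y => fderiv ℝ (Phi l) y (EuclideanSpace.single (2:Fin 3) (1:ℝ))) x
      (EuclideanSpace.single (0:Fin 3) (1:ℝ)) = _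
    rw [hev2.fderiv_eq]; exact fderiv_g2_0 l x hp hm
  have e12 : hess (Phi l) x 1 2 = 2 * l * (x 1) / (1 - x 2)^2 := by
    show fderiv ℝ (fun y => fderiv ℝ (Phi l) y (EuclideanSpace.single (2:Fin 3) (1:ℝ))) x
      (EuclideanSpace.single (1:Fin 3) (1:ℝ)) = _
    rw [hev2.fderiv_eq]; exact fderiv_g2_1 l x hp hm
  have e22 : hess (Phi l) x 2 2
      = 2 * l * (x 0)^2 / (1 + x 2)^3 + 2 * l * (x 1)^2 / (1 - x 2)^3 := by
    show fderiv ℝ (fun y => fderiv ℝ (Phi l) y (EuclideanSpace.single (2:Fin 3) (1:ℝ))) x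
      (EuclideanSpace.single (2:Fin 3) (1:ℝ)) = _
    rw [hev2.fderiv_eq]; exact fderiv_g2_2 l x hp hm
  -- hermitian
  have hH : (hess (Phi l) x).IsHermitian := by
    show (hess (Phi l) x)ᴴ = hess (Phi l) x
    ext i j
    rw [Matrix.conjTranspose_apply, star_trivial]
    fin_cases i <;> fin_cases j <;>
      first
        | rfl
        | exact e10.trans e01.symm
        | exact e01.trans e10.symm
        | exact e20.trans e02.symm
        | exact e02.trans e20.symm
        | exact e21.trans e12.symm
        | exact e12.trans e21.symm
  refine ⟨hH, ?_⟩
  -- the square root and its square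
  have hDnn : (0:ℝ) ≤ 1 / 4 * (2 * (1 / (1 + x 2)) * (1 / (1 - x 2)) * x 2 +
      ((1 / (1 - x 2)) ^ 3 * (x 1) ^ 2 - (1 / (1 + x 2)) ^ 3 * (x 0) ^ 2)) ^ 2 +
      (1 / (1 + x 2)) ^ 3 * (1 / (1 - x 2)) ^ 3 * (x 0) ^ 2 * (x 1) ^ 2 := by
    have h2 : (0:ℝ) ≤ (1 / (1 + x 2)) ^ 3 * (1 / (1 - x 2)) ^ 3 * (x 0) ^ 2 * (x 1) ^ 2 :=
      mul_nonneg (mul_nonneg (mul_nonneg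
        (pow_nonneg (le_of_lt (one_div_pos.mpr hp')) 3)
        (pow_nonneg (le_of_lt (one_div_pos.mpr hm')) 3)) (sq_nonneg _)) (sq_nonneg _)
    have h1 : (0:ℝ) ≤ 1 / 4 * (2 * (1 / (1 + x 2)) * (1 / (1 - x 2)) * x 2 +
        ((1 / (1 - x 2)) ^ 3 * (x 1) ^ 2 - (1 / (1 + x 2)) ^ 3 * (x 0) ^ 2)) ^ 2 := by positivity
    linarith
  have hS2 := Real.sq_sqrt hDnn
  refine eig_multiset hH _ ?_
  rw [charpoly_fin3, e00, e01, e02, e10, e11, e12, e20, e21, e22]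
  refine cubic_factor _ _ _ _ _ ?_ ?_ ?_
  · simp only [Lam]
    rw [sum_form]
    field_simp
    ring
  · simp only [Lam]
    rw [prod_form _ _ _ _ hS2]
    field_simp
    ring
  · field_simp
    ring
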